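/- Let $G$ be as above and $H \leq G$ a subgroup containing at least two distinct involutions. Then $H$ is generated by two involutions $f_k$ and $f_{k+d}$ (for suitable $k \in \mathbb{Z}$, $d \in \mathbb{N}$), and $H$ is isomorphic to the infinite dihedral group. -/

import Mathlib

namespace Stmt12Aux

abbrev U2 := (Matrix (Fin 2) (Fin 2) ℤ)ˣ

def A (j : ℤ) : U2 :=
  ⟨!![1,0;j,1], !![1,0;-j,1],
    by rw [Matrix.mul_fin_two, Matrix.one_fin_two]; norm_num,
    by rw [Matrix.mul_fin_two, Matrix.one_fin_two]; norm_num⟩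

def F (j : ℤ) : U2 :=
  ⟨!![1,0;j,-1], !![1,0;j,-1],
    by rw [Matrix.mul_fin_two, Matrix.one_fin_two]; norm_num,
    by rw [Matrix.mul_fin_two, Matrix.one_fin_two]; norm_num⟩

@[simp] lemma A_val (j : ℤ) : (A j : Matrix (Fin 2) (Fin 2) ℤ) = !![1,0;j,1] := rfl
@[simp] lemma F_val (j : ℤ) : (F j : Matrix (Fin 2) (Fin 2) ℤ) = !![1,0;j,-1] := rfl

lemma A_mul (i j : ℤ) : A i * A j = A (i + j) := by
  ext : 1
  show (!![1,0;i,1] : Matrix (Fin 2) (Fin 2) ℤ) * !![1,0;j,1] = _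
  rw [Matrix.mul_fin_two]; norm_num [add_comm]

@[simp] lemma A_zero : A 0 = 1 := by
  ext : 1
  show (!![1,0;(0:ℤ),1] : Matrix (Fin 2) (Fin 2) ℤ) = 1
  rw [Matrix.one_fin_two]

lemma F_mul_F (i j : ℤ) : F i * F j = A (i - j) := by
  ext : 1
  show (!![1,0;i,-1] : Matrix (Fin 2) (Fin 2) ℤ) * !![1,0;j,-1] = _
  rw [Matrix.mul_fin_two]; norm_num [sub_eq_add_neg, add_comm]

lemma A_mul_F (i j : ℤ) : A i * F j = F (i + j) := by
  ext : 1
  show (!![1,0;i,1] : Matrix (Fin 2) (Fin 2) ℤ) * !![1,0;j,-1] = _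
  rw [Matrix.mul_fin_two]; norm_num [add_comm]

lemma F_mul_A (i j : ℤ) : F i * A j = F (i - j) := by
  ext : 1
  show (!![1,0;i,-1] : Matrix (Fin 2) (Fin 2) ℤ) * !![1,0;j,1] = _
  rw [Matrix.mul_fin_two]; norm_num [sub_eq_add_neg, add_comm]

lemma A_inv (j : ℤ) : (A j)⁻¹ = A (-j) :=
  inv_eq_of_mul_eq_one_right (by rw [A_mul]; simp)

lemma A_eq_one_iff {j : ℤ} : A j = 1 ↔ j = 0 := by
  constructor
  · intro h
    have h' : (!![1,0;j,1] : Matrix (Fin 2) (Fin 2) ℤ) = 1 := congrArg Units.val h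
    rw [Matrix.one_fin_two] at h'
    have := Matrix.ext_iff.mpr h' 1 0
    simpa using this
  · rintro rfl; simp

lemma F_ne_one (j : ℤ) : F j ≠ 1 := by
  intro h
  have h' : (!![1,0;j,-1] : Matrix (Fin 2) (Fin 2) ℤ) = 1 := congrArg Units.val h
  rw [Matrix.one_fin_two] at h'
  have := Matrix.ext_iff.mpr h' 1 1
  simp at this

lemma F_inj {i j : ℤ} (h : F i = F j) : i = j := by
  have h' : (!![1,0;i,-1] : Matrix (Fin 2) (Fin 2) ℤ) = !![1,0;j,-1] := congrArg Units.val h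
  have := Matrix.ext_iff.mpr h' 1 0
  simpa using this

lemma A_zpow (i : ℤ) (n : ℤ) : (A i) ^ n = A (n * i) := by
  induction n using Int.induction_on with
  | zero => simp
  | succ m ih => rw [zpow_add_one, ih, A_mul]; ring_nf
  | pred m ih => rw [zpow_sub_one, ih, A_inv, A_mul]; ring_nf

/-- hom from Z/2 -/
def zmod2Hom {K : Type*} [Group K] (w : K) (hw : w ^ 2 = 1) :
    Multiplicative (ZMod 2) →* K where
  toFun g := w ^ (Multiplicative.toAdd g).val
  map_one' := by
    show w ^ (0 : ZMod 2).val = 1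
    rw [show (0 : ZMod 2).val = 0 from rfl, pow_zero]
  map_mul' a b := by
    show w ^ ((Multiplicative.toAdd a) + (Multiplicative.toAdd b)).val =
      w ^ (Multiplicative.toAdd a).val * w ^ (Multiplicative.toAdd b).val
    have h2 : ∀ z : ZMod 2, z = 0 ∨ z = 1 := by decide
    rcases h2 (Multiplicative.toAdd a) with ha | ha <;>
      rcases h2 (Multiplicative.toAdd b) with hb | hb <;> rw [ha, hb]
    · rw [show ((0 : ZMod 2) + 0).val = 0 from rfl, show (0 : ZMod 2).val = 0 from rfl]
      simp
    · rw [show ((0 : ZMod 2) + 1).val = 1 from rfl, show (0 : ZMod 2).val = 0 from rfl,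
        show (1 : ZMod 2).val = 1 from rfl, pow_zero, pow_one, one_mul]
    · rw [show ((1 : ZMod 2) + 0).val = 1 from rfl, show (0 : ZMod 2).val = 0 from rfl,
        show (1 : ZMod 2).val = 1 from rfl, pow_zero, pow_one, mul_one]
    · rw [show ((1 : ZMod 2) + 1).val = 0 from rfl, show (1 : ZMod 2).val = 1 from rfl]
      rw [pow_zero, pow_one, ← pow_two, hw]

lemma zmod2Hom_apply {K : Type*} [Group K] (w : K) (hw : w ^ 2 = 1) :
    zmod2Hom w hw (Multiplicative.ofAdd 1) = w := by
  show w ^ (1 : ZMod 2).val = w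
  rw [show (1 : ZMod 2).val = 1 from rfl, pow_one]

lemma conj_lemma {K : Type*} [Group K] (x y : K) (hx : x ^ 2 = 1) (hy : y ^ 2 = 1) (n : ℤ) :
    x * (y * x) ^ n = (y * x) ^ (-n) * x := by
  have hxi : x⁻¹ = x := by rw [inv_eq_iff_mul_eq_one, ← pow_two, hx]
  have hyi : y⁻¹ = y := by rw [inv_eq_iff_mul_eq_one, ← pow_two, hy]
  have key : x * (y * x) * x⁻¹ = (y * x)⁻¹ := by
    rw [hxi, _root_.mul_inv_rev, hxi, hyi, mul_assoc x (y*x) x, mul_assoc y x x, ← pow_two x, hx, mul_one]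
  have h2 : x * (y * x) ^ n * x⁻¹ = ((y * x)⁻¹) ^ n := by
    rw [← key, ← conj_zpow]
  rw [_root_.inv_zpow, ← zpow_neg] at h2
  rw [eq_comm, ← h2, hxi, mul_assoc, ← pow_two x, hx, mul_one]


lemma conj_lemmaP {K : Type*} [Group K] (x y : K) (hx : x ^ 2 = 1) (hy : y ^ 2 = 1) (n : ℤ) :
    x * (y * x) ^ n = (y * x) ^ (-n) * x := by
  have hxi : x⁻¹ = x := by rw [inv_eq_iff_mul_eq_one, ← pow_two, hx]
  have hyi : y⁻¹ = y := by rw [inv_eq_iff_mul_eq_one, ← pow_two, hy]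
  have key : x * (y * x) * x⁻¹ = (y * x)⁻¹ := by
    rw [hxi, _root_.mul_inv_rev, hxi, hyi, mul_assoc x (y*x) x, mul_assoc y x x, ← pow_two x, hx, mul_one]
  have h2 : x * (y * x) ^ n * x⁻¹ = ((y * x)⁻¹) ^ n := by
    rw [← key, ← conj_zpow]
  rw [_root_.inv_zpow, ← zpow_neg] at h2
  rw [eq_comm, ← h2, hxi, mul_assoc, ← pow_two x, hx, mul_one]

lemma step_x' {K : Type*} [Group K] (x y : K) (hx : x^2=1) (hy : y^2=1) (n : ℤ) :
    x * ((y*x)^n * x) = (y*x)^(-n) := by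
  rw [← mul_assoc, conj_lemmaP x y hx hy n, mul_assoc, ← pow_two, hx, mul_one]

lemma step_y {K : Type*} [Group K] (x y : K) (hx : x^2=1) (hy : y^2=1) (n : ℤ) :
    y * (y*x)^n = (y*x)^(1-n) * x := by
  have h1 : y = (y*x)*x := by rw [mul_assoc, ← pow_two, hx, mul_one]
  calc y * (y*x)^n = (y*x) * (x * (y*x)^n) := by rw [← mul_assoc, ← h1]
  _ = (y*x) * ((y*x)^(-n) * x) := by rw [conj_lemmaP x y hx hy]
  _ = ((y*x)^(1:ℤ) * (y*x)^(-n)) * x := by rw [zpow_one]; group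
  _ = (y*x)^(1-n) * x := by rw [← zpow_add]; norm_num [sub_eq_add_neg]

lemma step_y' {K : Type*} [Group K] (x y : K) (hx : x^2=1) (hy : y^2=1) (n : ℤ) :
    y * ((y*x)^n * x) = (y*x)^(1-n) := by
  rw [← mul_assoc, step_y x y hx hy, mul_assoc, ← pow_two, hx, mul_one]

abbrev Cop := Monoid.Coprod (Multiplicative (ZMod 2)) (Multiplicative (ZMod 2))
def X : Cop := Monoid.Coprod.inl (Multiplicative.ofAdd 1)
def Y : Cop := Monoid.Coprod.inr (Multiplicative.ofAdd 1)

lemma X_sq : X ^ 2 = 1 := by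
  rw [pow_two]
  show Monoid.Coprod.inl _ * Monoid.Coprod.inl _ = 1
  rw [← map_mul, show (Multiplicative.ofAdd (1 : ZMod 2)) * Multiplicative.ofAdd 1 = 1 by decide,
    map_one]

lemma Y_sq : Y ^ 2 = 1 := by
  rw [pow_two]
  show Monoid.Coprod.inr _ * Monoid.Coprod.inr _ = 1
  rw [← map_mul, show (Multiplicative.ofAdd (1 : ZMod 2)) * Multiplicative.ofAdd 1 = 1 by decide,
    map_one]

lemma normal_form (g : Cop) : ∃ n : ℤ, g = (Y * X) ^ n ∨ g = (Y * X) ^ n * X := by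
  have hm : ∀ m : Multiplicative (ZMod 2), m = 1 ∨ m = Multiplicative.ofAdd 1 := by decide
  induction g using Monoid.Coprod.induction_on' with
  | one => exact ⟨0, Or.inl (by rw [zpow_zero])⟩
  | inl_mul m w ih =>
    obtain ⟨n, h | h⟩ := ih <;>
      rcases hm m with rfl | rfl
    · exact ⟨n, Or.inl (by rw [map_one, one_mul, h])⟩
    · exact ⟨-n, Or.inr (by rw [h]; exact conj_lemmaP X Y X_sq Y_sq n)⟩
    · exact ⟨n, Or.inr (by rw [map_one, one_mul, h])⟩
    · exact ⟨-n, Or.inl (by rw [h]; exact step_x' X Y X_sq Y_sq n)⟩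
  | inr_mul m w ih =>
    obtain ⟨n, h | h⟩ := ih <;>
      rcases hm m with rfl | rfl
    · exact ⟨n, Or.inl (by rw [map_one, one_mul, h])⟩
    · exact ⟨1 - n, Or.inr (by rw [h]; exact step_y X Y X_sq Y_sq n)⟩
    · exact ⟨n, Or.inr (by rw [map_one, one_mul, h])⟩
    · exact ⟨1 - n, Or.inl (by rw [h]; exact step_y' X Y X_sq Y_sq n)⟩

end Stmt12Aux

open Stmt12Aux

/-- let `H ≤ G = { !![1,0;k,±1] } ⊂ GL(2,ℤ)` contain at least two distinct
involutions. Then `H` is generated by two involutions `f_k`, `f_{k+d}` for suitable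
`k : ℤ`, `d ≥ 1`, and `H` is isomorphic to the infinite dihedral group `ℤ₂ * ℤ₂`. -/
theorem stmt_12 (H : Subgroup (Matrix (Fin 2) (Fin 2) ℤ)ˣ)
    (hG : ∀ u ∈ H, ∃ j : ℤ, (u : Matrix (Fin 2) (Fin 2) ℤ) = !![1, 0; j, 1] ∨
      (u : Matrix (Fin 2) (Fin 2) ℤ) = !![1, 0; j, -1])
    (h2 : ∃ u ∈ H, ∃ v ∈ H, u ≠ v ∧ u ^ 2 = 1 ∧ v ^ 2 = 1 ∧ u ≠ 1 ∧ v ≠ 1) :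
    ∃ k : ℤ, ∃ d : ℕ, 1 ≤ d ∧
      ∃ u v : (Matrix (Fin 2) (Fin 2) ℤ)ˣ, u ∈ H ∧ v ∈ H ∧
        (u : Matrix (Fin 2) (Fin 2) ℤ) = !![1, 0; k, -1] ∧
        (v : Matrix (Fin 2) (Fin 2) ℤ) = !![1, 0; k + (d : ℤ), -1] ∧
        u ^ 2 = 1 ∧ u ≠ 1 ∧ v ^ 2 = 1 ∧ v ≠ 1 ∧
        H = Subgroup.closure {u, v} ∧
        Nonempty (H ≃* Monoid.Coprod (Multiplicative (ZMod 2)) (Multiplicative (ZMod 2))) := by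
  classical
  obtain ⟨u₀, hu₀H, v₀, hv₀H, huv, hu2, hv2, hu1, hv1⟩ := h2
  have invF : ∀ w : U2, w ∈ H → w ^ 2 = 1 → w ≠ 1 → ∃ j : ℤ, w = F j := by
    intro w hw hw2 hw1
    obtain ⟨j, hj | hj⟩ := hG w hw
    · exfalso
      have hwA : w = A j := Units.ext (by rw [hj]; rfl)
      rw [hwA, pow_two, A_mul, A_eq_one_iff] at hw2
      exact hw1 (by rw [hwA, show j = 0 by omega, A_zero])
    · exact ⟨j, Units.ext (by rw [hj]; rfl)⟩
  obtain ⟨k₁, rfl⟩ := invF u₀ hu₀H hu2 hu1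
  obtain ⟨k₂, rfl⟩ := invF v₀ hv₀H hv2 hv1
  have hk12 : k₁ ≠ k₂ := fun h => huv (by rw [h])
  -- the subgroup of translations
  let T : AddSubgroup ℤ :=
    { carrier := {j | A j ∈ H}
      zero_mem' := by simpa using one_mem H
      add_mem' := fun {a b} ha hb => by
        show A (a + b) ∈ H; rw [← A_mul]; exact H.mul_mem ha hb
      neg_mem' := fun {a} ha => by
        show A (-a) ∈ H; rw [← A_inv]; exact H.inv_mem ha }
  have hmemT : ∀ j : ℤ, j ∈ T ↔ A j ∈ H := fun j => Iff.rfl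
  obtain ⟨g, hg⟩ := Int.subgroup_cyclic T
  have hTg : ∀ j : ℤ, j ∈ T ↔ g ∣ j := by
    intro j
    rw [hg, AddSubgroup.mem_closure_singleton]
    constructor
    · rintro ⟨n, rfl⟩; exact ⟨n, by rw [smul_eq_mul]; ring⟩
    · rintro ⟨c, rfl⟩; exact ⟨c, by rw [smul_eq_mul]; ring⟩
  have hsub : A (k₁ - k₂) ∈ H := by rw [← F_mul_F]; exact mul_mem hu₀H hv₀H
  have hgne : g ≠ 0 := by
    intro h0
    have h1 : g ∣ (k₁ - k₂) := (hTg _).1 hsub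
    rw [h0, zero_dvd_iff, sub_eq_zero] at h1
    exact hk12 h1
  set d : ℕ := g.natAbs with hd
  have hd1 : 1 ≤ d := Nat.one_le_iff_ne_zero.2 (Int.natAbs_ne_zero.2 hgne)
  have hdT : (d : ℤ) ∈ T := by
    have hgT : g ∈ T := (hTg g).2 dvd_rfl
    rcases Int.natAbs_eq g with h | h
    · rw [← h]; exact hgT
    · have := T.neg_mem hgT
      rw [show -g = (d : ℤ) by omega] at this
      exact this
  have hUH : F k₁ ∈ H := hu₀H
  have hVH : F (k₁ + (d : ℤ)) ∈ H := by
    rw [add_comm, ← A_mul_F]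
    exact mul_mem ((hmemT (d : ℤ)).1 hdT) hu₀H
  -- classification of elements of H
  have classify : ∀ w : U2, w ∈ H → ∃ n : ℤ,
      w = A (n * d) ∨ w = F (k₁ + n * d) := by
    intro w hw
    obtain ⟨j, hj | hj⟩ := hG w hw
    · have hwA : w = A j := Units.ext (by rw [hj]; rfl)
      have hdvd : (d : ℤ) ∣ j := Int.natAbs_dvd.2 ((hTg j).1 (by rw [hmemT, ← hwA]; exact hw))
      obtain ⟨n, rfl⟩ := hdvd
      exact ⟨n, Or.inl (by rw [hwA, mul_comm])⟩
    · have hwF : w = F j := Units.ext (by rw [hj]; rfl)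
      have hAm : A (j - k₁) ∈ H := by
        rw [← F_mul_F]; exact mul_mem (hwF ▸ hw) hu₀H
      have hdvd : (d : ℤ) ∣ (j - k₁) := Int.natAbs_dvd.2 ((hTg _).1 hAm)
      obtain ⟨n, hn⟩ := hdvd
      exact ⟨n, Or.inr (by rw [hwF]; congr 1; have h2 := mul_comm (d : ℤ) n; linarith)⟩
  have hVU : F (k₁ + (d : ℤ)) * F k₁ = A d := by rw [F_mul_F]; congr 1; ring
  refine ⟨k₁, d, hd1, F k₁, F (k₁ + (d : ℤ)), hUH, hVH, rfl, rfl, ?_, F_ne_one _, ?_, F_ne_one _,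
    ?_, ?_⟩
  · rw [pow_two, F_mul_F, sub_self, A_zero]
  · rw [pow_two, F_mul_F, sub_self, A_zero]
  · -- generation
    apply le_antisymm
    · intro w hw
      obtain ⟨n, h | h⟩ := classify w hw
      · rw [h, ← A_zpow, ← hVU]
        exact Subgroup.zpow_mem _ (mul_mem
          (Subgroup.subset_closure (by simp))
          (Subgroup.subset_closure (by simp))) n
      · have : w = A (n * d) * F k₁ := by rw [A_mul_F, h, add_comm (n * (d:ℤ)) k₁]
        rw [this, ← A_zpow, ← hVU]
        exact mul_mem
          (Subgroup.zpow_mem _ (mul_mem (Subgroup.subset_closure (by simp))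
            (Subgroup.subset_closure (by simp))) n)
          (Subgroup.subset_closure (by simp))
    · rw [Subgroup.closure_le]
      rintro x hx
      rcases hx with rfl | rfl
      · exact hUH
      · exact hVH
  · -- the isomorphism
    let u' : ↥H := ⟨F k₁, hUH⟩
    let v' : ↥H := ⟨F (k₁ + (d : ℤ)), hVH⟩
    have hu'2 : u' ^ 2 = 1 := by
      apply Subtype.ext
      rw [SubmonoidClass.coe_pow]
      show (F k₁) ^ 2 = 1
      rw [pow_two, F_mul_F, sub_self, A_zero]
    have hv'2 : v' ^ 2 = 1 := by
      apply Subtype.ext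
      rw [SubmonoidClass.coe_pow]
      show (F (k₁ + (d : ℤ))) ^ 2 = 1
      rw [pow_two, F_mul_F, sub_self, A_zero]
    let φ : Cop →* ↥H := Monoid.Coprod.lift (zmod2Hom u' hu'2) (zmod2Hom v' hv'2)
    have hφX : φ X = u' := by
      rw [show X = Monoid.Coprod.inl (Multiplicative.ofAdd 1) from rfl,
        Monoid.Coprod.lift_apply_inl, zmod2Hom_apply]
    have hφY : φ Y = v' := by
      rw [show Y = Monoid.Coprod.inr (Multiplicative.ofAdd 1) from rfl,
        Monoid.Coprod.lift_apply_inr, zmod2Hom_apply]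
    have hcoe : ∀ n : ℤ, (((v' * u') ^ n : ↥H) : U2) = A (n * d) := by
      intro n
      rw [← A_zpow, ← hVU]
      rw [SubgroupClass.coe_zpow]
      rfl
    have hinj : Function.Injective φ := by
      rw [injective_iff_map_eq_one]
      intro a ha
      obtain ⟨n, h | h⟩ := normal_form a
      · subst h
        rw [map_zpow, map_mul, hφY, hφX] at ha
        have hval : A (n * (d : ℤ)) = 1 := by
          rw [← hcoe n, ha]; rfl
        have hn0 : n = 0 := by
          rcases mul_eq_zero.1 (A_eq_one_iff.1 hval) with h0 | h0
          · exact h0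
          · exfalso; omega
        rw [hn0, zpow_zero]
      · exfalso
        subst h
        rw [map_mul, map_zpow, map_mul, hφY, hφX] at ha
        have hval : (((v' * u') ^ n * u' : ↥H) : U2) = 1 := by rw [ha]; rfl
        have : A (n * (d : ℤ)) * F k₁ = 1 := by
          rw [← hcoe n]; exact hval
        rw [A_mul_F] at this
        exact F_ne_one _ this
    have hsurj : Function.Surjective φ := by
      intro w
      obtain ⟨n, h | h⟩ := classify w.val w.2
      · refine ⟨(Y * X) ^ n, Subtype.ext ?_⟩
        rw [map_zpow, map_mul, hφY, hφX, hcoe n]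
        exact h.symm
      · refine ⟨(Y * X) ^ n * X, Subtype.ext ?_⟩
        rw [map_mul, map_zpow, map_mul, hφY, hφX]
        show (((v' * u') ^ n : ↥H) : U2) * F k₁ = (w : U2)
        rw [hcoe n, A_mul_F, h, add_comm]
    exact ⟨(MulEquiv.ofBijective φ ⟨hinj, hsurj⟩).symm⟩
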